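/- The harmonic number functions H_s(n) = ∑_{0<k<n} 1/k^s (s ≥ 1) are linearly independent over the ring ℚ[n] of polynomial functions of n: if polynomials P₀(n), P₁(n), …, P_S(n) ∈ ℚ[n] satisfy P₀(n) + ∑_{s=1}^{S} P_s(n) H_s(n) = 0 for all positive integers n, then all P_s are the zero polynomial. -/

import Mathlib

open Finset

section Aux

/-- A rational is an integer. -/
private def IsIntQ (q : ℚ) : Prop := ∃ z : ℤ, q = (z : ℚ)

/-- A rational is `p` times an integer. -/
private def IdivQ (p : ℕ) (q : ℚ) : Prop := ∃ z : ℤ, q = (p : ℚ) * (z : ℚ)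

private lemma isIntQ_sum {α : Type*} (t : Finset α) (f : α → ℚ)
    (h : ∀ a ∈ t, IsIntQ (f a)) : IsIntQ (∑ a ∈ t, f a) := by
  classical
  induction t using Finset.induction_on with
  | empty => exact ⟨0, by simp⟩
  | insert _ _ hx ih =>
      rename_i a t'
      rw [Finset.sum_insert hx]
      obtain ⟨u, hu⟩ := h a (Finset.mem_insert_self _ _)
      obtain ⟨v, hv⟩ := ih (fun x hx' => h x (Finset.mem_insert_of_mem hx'))
      exact ⟨u + v, by rw [hu, hv]; push_cast; ring⟩

private lemma idivQ_sum {α : Type*} (p : ℕ) (t : Finset α) (f : α → ℚ)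
    (h : ∀ a ∈ t, IdivQ p (f a)) : IdivQ p (∑ a ∈ t, f a) := by
  classical
  induction t using Finset.induction_on with
  | empty => exact ⟨0, by simp⟩
  | insert _ _ hx ih =>
      rename_i a t'
      rw [Finset.sum_insert hx]
      obtain ⟨u, hu⟩ := h a (Finset.mem_insert_self _ _)
      obtain ⟨v, hv⟩ := ih (fun x hx' => h x (Finset.mem_insert_of_mem hx'))
      exact ⟨u + v, by rw [hu, hv]; push_cast; ring⟩

/-- Key lemma: the top polynomial coefficient vanishes. -/
private lemma keyLemma (S : ℕ) (hS : 1 ≤ S) (P : ℕ → Polynomial ℚ)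
    (hrel : ∀ n : ℕ, 1 ≤ n →
      (P 0).eval (n : ℚ) +
        ∑ s ∈ Finset.Icc 1 S,
          (P s).eval (n : ℚ) * (∑ k ∈ Finset.Ioo 0 n, (1 : ℚ) / (k : ℚ) ^ s) = 0) :
    P S = 0 := by
  classical
  -- clear denominators of each polynomial
  have hbq : ∀ s : ℕ, ∃ (b : ℤ) (Q : Polynomial ℤ), b ≠ 0 ∧
      Q.map (algebraMap ℤ ℚ) = (b : ℤ) • P s := by
    intro s
    obtain ⟨b, hb⟩ :=
      IsLocalization.integerNormalization_map_to_map (nonZeroDivisors ℤ) (P s)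
    exact ⟨(b : ℤ), _, nonZeroDivisors.coe_ne_zero b, hb⟩
  choose b Q hb hQ using hbq
  have hQev : ∀ (s : ℕ) (m : ℤ),
      (((Q s).eval m : ℤ) : ℚ) = (b s : ℚ) * (P s).eval ((m : ℤ) : ℚ) := by
    intro s m
    have h := congrArg (Polynomial.eval ((m : ℤ) : ℚ)) (hQ s)
    rw [Polynomial.eval_smul, zsmul_eq_mul] at h
    rw [← h]
    have : algebraMap ℤ ℚ = Int.castRingHom ℚ := rfl
    rw [this, Polynomial.eval_intCast_map]
    rfl
  set D : ℤ := ∏ t ∈ Finset.range (S + 1), b t with hDdef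
  have hD0 : D ≠ 0 := Finset.prod_ne_zero_iff.mpr (fun t _ => hb t)
  have hbdvdD : ∀ s ∈ Finset.range (S + 1), b s ∣ D :=
    fun s hs => Finset.dvd_prod_of_mem _ hs
  -- the main statement over ℤ
  suffices hroot : ∀ a : ℕ, 1 ≤ a → (Q S).eval ((a : ℤ)) = 0 by
    have hQS0 : Q S = 0 := by
      apply Polynomial.eq_zero_of_infinite_isRoot
      refine Set.infinite_of_injective_forall_mem
        (f := fun a : ℕ => ((a : ℤ) + 1)) ?_ ?_
      · intro x y hxy; simpa using hxy
      · intro a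
        have := hroot (a + 1) (by omega)
        simpa [Polynomial.IsRoot] using this
    have hsm : (b S : ℤ) • P S = 0 := by
      rw [← hQ S, hQS0, Polynomial.map_zero]
    rcases smul_eq_zero.mp hsm with h | h
    · exact absurd h (hb S)
    · exact h
  intro a ha
  by_contra hne
  obtain ⟨p, hpge, hp⟩ := Nat.exists_infinite_primes
    (max (max (a + 1) (D.natAbs + 1)) (((Q S).eval (a : ℤ)).natAbs + 1))
  have hap : a < p := by
    have := le_trans (le_max_left _ _) (le_max_left _ _) |>.trans hpge; omega
  have hDp : D.natAbs < p := by
    have := le_trans (le_max_right _ _) (le_max_left _ _) |>.trans hpge; omega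
  have hQp : ((Q S).eval (a : ℤ)).natAbs < p := by
    have := le_max_right (max (a + 1) (D.natAbs + 1)) _ |>.trans hpge; omega
  have hpZ : Prime (p : ℤ) := Nat.prime_iff_prime_int.mp hp
  have hpD : ¬ (p : ℤ) ∣ D := by
    intro hdvd
    have h1 : p ∣ D.natAbs := Int.natAbs_dvd_natAbs.mpr (by simpa using hdvd)
    have h2 : D.natAbs ≠ 0 := Int.natAbs_ne_zero.mpr hD0
    exact absurd (Nat.le_of_dvd (Nat.pos_of_ne_zero h2) h1) (by omega)
  set n : ℕ := p + a with hndef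
  have hn1 : 1 ≤ n := by omega
  have hpIoo : p ∈ Finset.Ioo 0 n := by
    rw [Finset.mem_Ioo]; exact ⟨hp.pos, by omega⟩
  set T : Finset ℕ := (Finset.Ioo 0 n).erase p with hTdef
  have hT : ∀ k ∈ T, 0 < k ∧ k < n ∧ k ≠ p := by
    intro k hk
    have h1 := Finset.mem_of_mem_erase hk
    rw [Finset.mem_Ioo] at h1
    exact ⟨h1.1, h1.2, Finset.ne_of_mem_erase hk⟩
  have hknotp : ∀ k ∈ T, ¬ p ∣ k := by
    intro k hk hdvd
    obtain ⟨h1, h2, h3⟩ := hT k hk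
    obtain ⟨c, rfl⟩ := hdvd
    have hc2 : 2 ≤ c := by
      rcases c with _ | _ | c
      · omega
      · simp at h3
      · omega
    have : p * 2 ≤ p * c := Nat.mul_le_mul_left p hc2
    omega
  set L : ℕ := ∏ k ∈ T, k with hLdef
  have hkL : ∀ k ∈ T, (k : ℤ) ∣ (L : ℤ) := by
    intro k hk
    exact_mod_cast Int.natCast_dvd_natCast.mpr (Finset.dvd_prod_of_mem _ hk)
  have hpL : ¬ (p : ℤ) ∣ (L : ℤ) := by
    intro hdvd
    have h1 : p ∣ L := Int.natCast_dvd_natCast.mp hdvd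
    exact (Prime.not_dvd_finset_prod hp.prime (fun k hk => hknotp k hk)) h1
  have hp0 : (p : ℚ) ≠ 0 := Nat.cast_ne_zero.mpr hp.pos.ne'
  have hk0 : ∀ k ∈ T, (k : ℚ) ≠ 0 :=
    fun k hk => Nat.cast_ne_zero.mpr (hT k hk).1.ne'
  -- integrality of D * P_s(n)
  have hQev' : ∀ s : ℕ,
      (((Q s).eval ((n : ℤ)) : ℤ) : ℚ) = (b s : ℚ) * (P s).eval ((n : ℕ) : ℚ) := by
    intro s
    have h := hQev s (n : ℤ)
    push_cast at h ⊢
    exact h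
  have hDs : ∀ s : ℕ, s ≤ S → IsIntQ ((D : ℚ) * (P s).eval ((n : ℕ) : ℚ)) := by
    intro s hs
    refine ⟨(∏ t ∈ (Finset.range (S + 1)).erase s, b t) * (Q s).eval ((n : ℤ)), ?_⟩
    have hDe : D = b s * ∏ t ∈ (Finset.range (S + 1)).erase s, b t :=
      (Finset.mul_prod_erase _ _ (Finset.mem_range.mpr (Nat.lt_succ_of_le hs))).symm
    rw [hDe]
    push_cast
    rw [hQev' s]
    ring
  -- integrality of L^S / k^s
  have hLk : ∀ s ∈ Finset.Icc 1 S, ∀ k ∈ T, IsIntQ ((L : ℚ) ^ S / (k : ℚ) ^ s) := by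
    intro s hs k hk
    have hsS : s ≤ S := (Finset.mem_Icc.mp hs).2
    have hdvd : (k : ℤ) ^ s ∣ (L : ℤ) ^ S :=
      dvd_trans (pow_dvd_pow _ hsS) (pow_dvd_pow_of_dvd (hkL k hk) S)
    obtain ⟨c, hc⟩ := hdvd
    refine ⟨c, ?_⟩
    have hc' : ((L : ℚ)) ^ S = (k : ℚ) ^ s * (c : ℚ) := by exact_mod_cast hc
    rw [div_eq_iff (pow_ne_zero _ (hk0 k hk))]
    rw [hc']; ring
  have hLA : ∀ s ∈ Finset.Icc 1 S,
      IsIntQ ((L : ℚ) ^ S * ∑ k ∈ T, (1 : ℚ) / (k : ℚ) ^ s) := by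
    intro s hs
    rw [Finset.mul_sum]
    apply isIntQ_sum
    intro k hk
    have := hLk s hs k hk
    rwa [show (L : ℚ) ^ S * ((1 : ℚ) / (k : ℚ) ^ s) = (L : ℚ) ^ S / (k : ℚ) ^ s by ring]
  -- the relation at n, with the k = p term split off
  have h0 := hrel n hn1
  have hsplit : ∀ s : ℕ, ∑ k ∈ Finset.Ioo 0 n, (1 : ℚ) / (k : ℚ) ^ s
      = 1 / (p : ℚ) ^ s + ∑ k ∈ T, (1 : ℚ) / (k : ℚ) ^ s := by
    intro s
    rw [← Finset.insert_erase hpIoo, Finset.sum_insert (Finset.notMem_erase _ _)]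
  simp only [hsplit] at h0
  -- abbreviations
  set A : ℕ → ℚ := fun s => ∑ k ∈ T, (1 : ℚ) / (k : ℚ) ^ s with hAdef
  -- multiply the relation by D * p^S * L^S
  have h1 : (D : ℚ) * (p : ℚ) ^ S * (L : ℚ) ^ S * ((P 0).eval ((n : ℕ) : ℚ) +
      ∑ s ∈ Finset.Icc 1 S, (P s).eval ((n : ℕ) : ℚ) * (1 / (p : ℚ) ^ s + A s)) = 0 := by
    rw [h0, mul_zero]
  rw [mul_add, Finset.mul_sum] at h1
  have h2 : ∀ s ∈ Finset.Icc 1 S,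
      (D : ℚ) * (p : ℚ) ^ S * (L : ℚ) ^ S *
        ((P s).eval ((n : ℕ) : ℚ) * (1 / (p : ℚ) ^ s + A s))
      = (D : ℚ) * (P s).eval ((n : ℕ) : ℚ) * (p : ℚ) ^ (S - s) * (L : ℚ) ^ S
        + (D : ℚ) * (P s).eval ((n : ℕ) : ℚ) * (p : ℚ) ^ S * ((L : ℚ) ^ S * A s) := by
    intro s hs
    have hsS : s ≤ S := (Finset.mem_Icc.mp hs).2
    rw [pow_sub₀ _ hp0 hsS]
    field_simp
  rw [Finset.sum_congr rfl h2, Finset.sum_add_distrib] at h1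
  have hSmem : S ∈ Finset.Icc 1 S := Finset.mem_Icc.mpr ⟨hS, le_refl _⟩
  rw [← Finset.sum_erase_add _ _ hSmem] at h1
  have hSS : (D : ℚ) * (P S).eval ((n : ℕ) : ℚ) * (p : ℚ) ^ (S - S) * (L : ℚ) ^ S
      = (D : ℚ) * (P S).eval ((n : ℕ) : ℚ) * (L : ℚ) ^ S := by
    rw [Nat.sub_self, pow_zero, mul_one]
  rw [hSS] at h1
  -- now h1 : t0 + ((sum over erase) + t_S + (sum of A-terms)) = 0
  have hpowS : (p : ℚ) ^ S = (p : ℚ) * (p : ℚ) ^ (S - 1) := by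
    conv_lhs => rw [show S = (S - 1) + 1 by omega]
    rw [pow_succ]; ring
  -- divisibility of the three other pieces
  have ht0 : IdivQ p ((D : ℚ) * (p : ℚ) ^ S * (L : ℚ) ^ S * (P 0).eval ((n : ℕ) : ℚ)) := by
    obtain ⟨z, hz⟩ := hDs 0 (Nat.zero_le S)
    refine ⟨z * (p : ℤ) ^ (S - 1) * (L : ℤ) ^ S, ?_⟩
    rw [show (D : ℚ) * (p : ℚ) ^ S * (L : ℚ) ^ S * (P 0).eval ((n : ℕ) : ℚ)
      = ((D : ℚ) * (P 0).eval ((n : ℕ) : ℚ)) * ((p : ℚ) ^ S * (L : ℚ) ^ S) by ring,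
      hz, hpowS]
    push_cast
    ring
  have ht1 : IdivQ p (∑ s ∈ (Finset.Icc 1 S).erase S,
      (D : ℚ) * (P s).eval ((n : ℕ) : ℚ) * (p : ℚ) ^ (S - s) * (L : ℚ) ^ S) := by
    apply idivQ_sum
    intro s hs
    have hsS : s ≤ S := (Finset.mem_Icc.mp (Finset.mem_of_mem_erase hs)).2
    have hsne : s ≠ S := Finset.ne_of_mem_erase hs
    obtain ⟨z, hz⟩ := hDs s hsS
    refine ⟨z * (p : ℤ) ^ (S - s - 1) * (L : ℤ) ^ S, ?_⟩
    have hpows : (p : ℚ) ^ (S - s) = (p : ℚ) * (p : ℚ) ^ (S - s - 1) := by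
      conv_lhs => rw [show S - s = (S - s - 1) + 1 by omega]
      rw [pow_succ]; ring
    rw [show (D : ℚ) * (P s).eval ((n : ℕ) : ℚ) * (p : ℚ) ^ (S - s) * (L : ℚ) ^ S
      = ((D : ℚ) * (P s).eval ((n : ℕ) : ℚ)) * ((p : ℚ) ^ (S - s) * (L : ℚ) ^ S) by ring,
      hz, hpows]
    push_cast
    ring
  have ht2 : IdivQ p (∑ s ∈ Finset.Icc 1 S,
      (D : ℚ) * (P s).eval ((n : ℕ) : ℚ) * (p : ℚ) ^ S * ((L : ℚ) ^ S * A s)) := by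
    apply idivQ_sum
    intro s hs
    have hsS : s ≤ S := (Finset.mem_Icc.mp hs).2
    obtain ⟨z, hz⟩ := hDs s hsS
    obtain ⟨w, hw⟩ := hLA s hs
    refine ⟨z * (p : ℤ) ^ (S - 1) * w, ?_⟩
    rw [show (D : ℚ) * (P s).eval ((n : ℕ) : ℚ) * (p : ℚ) ^ S * ((L : ℚ) ^ S * A s)
      = ((D : ℚ) * (P s).eval ((n : ℕ) : ℚ)) * (p : ℚ) ^ S * ((L : ℚ) ^ S * A s) by ring,
      hz, hpowS, hw]
    push_cast
    ring
  -- conclude divisibility of the top term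
  have hIdiv : IdivQ p ((D : ℚ) * (P S).eval ((n : ℕ) : ℚ) * (L : ℚ) ^ S) := by
    obtain ⟨z0, hz0⟩ := ht0
    obtain ⟨z1, hz1⟩ := ht1
    obtain ⟨z2, hz2⟩ := ht2
    refine ⟨-(z0 + z1 + z2), ?_⟩
    have : (D : ℚ) * (P S).eval ((n : ℕ) : ℚ) * (L : ℚ) ^ S
        = -((D : ℚ) * (p : ℚ) ^ S * (L : ℚ) ^ S * (P 0).eval ((n : ℕ) : ℚ))
          - (∑ s ∈ (Finset.Icc 1 S).erase S,
              (D : ℚ) * (P s).eval ((n : ℕ) : ℚ) * (p : ℚ) ^ (S - s) * (L : ℚ) ^ S)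
          - (∑ s ∈ Finset.Icc 1 S,
              (D : ℚ) * (P s).eval ((n : ℕ) : ℚ) * (p : ℚ) ^ S * ((L : ℚ) ^ S * A s)) := by
      linarith [h1]
    rw [this, hz0, hz1, hz2]
    push_cast
    ring
  -- transfer to ℤ
  obtain ⟨z, hz⟩ := hIdiv
  set E : ℤ := ∏ t ∈ (Finset.range (S + 1)).erase S, b t with hEdef
  have hDE : D = b S * E :=
    (Finset.mul_prod_erase _ _ (Finset.mem_range.mpr (Nat.lt_succ_of_le (le_refl S)))).symm
  have hfin : ((E * (Q S).eval ((n : ℤ)) * (L : ℤ) ^ S : ℤ) : ℚ)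
      = (((p : ℤ) * z : ℤ) : ℚ) := by
    push_cast
    rw [hQev' S]
    calc (E : ℚ) * ((b S : ℚ) * (P S).eval ((n : ℕ) : ℚ)) * (L : ℚ) ^ S
        = (D : ℚ) * (P S).eval ((n : ℕ) : ℚ) * (L : ℚ) ^ S := by
          rw [hDE]; push_cast; ring
      _ = (p : ℚ) * (z : ℚ) := hz
  have hintEq : E * (Q S).eval ((n : ℤ)) * (L : ℤ) ^ S = (p : ℤ) * z :=
    Int.cast_injective hfin
  have hdvd1 : (p : ℤ) ∣ E * (Q S).eval ((n : ℤ)) * (L : ℤ) ^ S := ⟨z, hintEq⟩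
  have hdvdQn : (p : ℤ) ∣ (Q S).eval ((n : ℤ)) := by
    rcases hpZ.dvd_mul.mp hdvd1 with h | h
    · rcases hpZ.dvd_mul.mp h with h' | h'
      · exfalso
        apply hpD
        rw [hDE]
        exact Dvd.dvd.mul_left h' (b S)
      · exact h'
    · exact absurd (hpZ.dvd_of_dvd_pow h) hpL
  have hdvdQa : (p : ℤ) ∣ (Q S).eval ((a : ℤ)) := by
    have hsub := Polynomial.sub_dvd_eval_sub ((n : ℤ)) ((a : ℤ)) (Q S)
    have hna : ((n : ℤ)) - ((a : ℤ)) = (p : ℤ) := by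
      rw [hndef]; push_cast; ring
    rw [hna] at hsub
    have := dvd_sub hdvdQn hsub
    simpa using this
  exact hne (Int.eq_zero_of_abs_lt_dvd hdvdQa
    (by rw [Int.abs_eq_natAbs]; exact_mod_cast hQp))

end Aux

/-- The harmonic number functions H_s(n) = ∑_{0<k<n} 1/k^s (s ≥ 1) are
linearly independent over the ring ℚ[n] of polynomial functions of n. -/
theorem stmt_13 (S : ℕ) (P : ℕ → Polynomial ℚ)
    (hrel : ∀ n : ℕ, 1 ≤ n →
      (P 0).eval (n : ℚ) +
        ∑ s ∈ Finset.Icc 1 S,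
          (P s).eval (n : ℚ) * (∑ k ∈ Finset.Ioo 0 n, (1 : ℚ) / (k : ℚ) ^ s) = 0) :
    ∀ s : ℕ, s ≤ S → P s = 0 := by
  induction S with
  | zero =>
      intro s hs
      have hs0 : s = 0 := Nat.le_zero.mp hs
      subst hs0
      have h : ∀ n : ℕ, 1 ≤ n → (P 0).eval ((n : ℕ) : ℚ) = 0 := by
        intro n hn
        have h := hrel n hn
        rwa [Finset.Icc_eq_empty (by omega), Finset.sum_empty, add_zero] at h
      apply Polynomial.eq_zero_of_infinite_isRoot
      refine Set.infinite_of_injective_forall_mem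
        (f := fun a : ℕ => ((a : ℚ) + 1)) ?_ ?_
      · intro x y hxy
        simpa using hxy
      · intro a
        have := h (a + 1) (by omega)
        simpa [Polynomial.IsRoot] using this
  | succ S ih =>
      intro s hs
      have hPS : P (S + 1) = 0 :=
        keyLemma (S + 1) (by omega) P hrel
      by_cases hsS : s ≤ S
      · apply ih ?_ s hsS
        intro n hn
        have h := hrel n hn
        rw [Finset.sum_Icc_succ_top (by omega : 1 ≤ S + 1)] at h
        rw [hPS] at h
        simpa using h
      · have hseq : s = S + 1 := by omega
        subst hseq
        exact hPS
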